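/- With T = L + M, R = K + M as above, R is a Prüfer domain if and only if T is a Prüfer domain, L is the fraction field of K, and K is a Prüfer domain. -/

import Mathlib

section Setup

variable {T : Type*} [CommRing T] [IsDomain T]

/-- The subring `K + M` of `T`, for a subring `K` and an ideal `M` of `T`. -/
def ringR (K : Subring T) (M : Ideal T) : Subring T where
  carrier := {t | ∃ k ∈ K, ∃ m ∈ M, t = k + m}
  one_mem' := ⟨1, K.one_mem, 0, M.zero_mem, by ring⟩
  zero_mem' := ⟨0, K.zero_mem, 0, M.zero_mem, by ring⟩
  add_mem' := by
    rintro a b ⟨k1, hk1, m1, hm1, rfl⟩ ⟨k2, hk2, m2, hm2, rfl⟩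
    exact ⟨k1 + k2, K.add_mem hk1 hk2, m1 + m2, M.add_mem hm1 hm2, by ring⟩
  neg_mem' := by
    rintro a ⟨k, hk, m, hm, rfl⟩
    exact ⟨-k, K.neg_mem hk, -m, M.neg_mem hm, by ring⟩
  mul_mem' := by
    rintro a b ⟨k1, hk1, m1, hm1, rfl⟩ ⟨k2, hk2, m2, hm2, rfl⟩
    refine ⟨k1 * k2, K.mul_mem hk1 hk2, k1 * m2 + m1 * k2 + m1 * m2, ?_, by ring⟩
    exact M.add_mem (M.add_mem (M.mul_mem_left _ hm2) (M.mul_mem_right _ hm1))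
      (M.mul_mem_left _ hm2)

theorem K_le_ringR (K : Subring T) (M : Ideal T) : K ≤ ringR K M :=
  fun k hk => ⟨k, hk, 0, M.zero_mem, (add_zero k).symm⟩

/-- An ideal `A` of `T`, viewed as a module over a subring `S` of `T`. -/
def idealAsMod (S : Subring T) (A : Ideal T) : Submodule ↥S T where
  carrier := A
  add_mem' := fun ha hb => A.add_mem ha hb
  zero_mem' := A.zero_mem
  smul_mem' := fun r a ha => A.mul_mem_left (r : T) ha

/-- The subring `L` of `T` is a field. -/
def IsFieldSub (L : Subring T) : Prop := ∀ x ∈ L, x ≠ 0 → ∃ y ∈ L, x * y = 1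

/-- `T = L ⊕ M` as additive groups: `L` is a retract of `T` with maximal ideal `M`. -/
def DirectSumDecomp (L : Subring T) (M : Ideal T) : Prop :=
  (∀ t : T, ∃ l ∈ L, ∃ m ∈ M, t = l + m) ∧ ∀ x ∈ L, x ∈ M → x = 0

/-- `L` is the field of fractions of `K` (inside `T`). -/
def IsFracOf (K L : Subring T) : Prop :=
  ∀ l ∈ L, ∃ a ∈ K, ∃ b ∈ K, b ≠ 0 ∧ l * b = a

/-- The module structure on a subring over a smaller subring. -/
noncomputable def modOfLE {K L : Subring T} (h : K ≤ L) : Module ↥K ↥L :=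
  ((Subring.inclusion h).toAlgebra).toModule

/-- `T` localized at the prime `M` is a valuation domain. -/
def ValAtPrime (M : Ideal T) (hp : M.IsPrime) : Prop :=
  @ValuationRing (@Localization.AtPrime T _ M hp) _
    (@IsLocalization.isDomain_of_local_atPrime T _ _ M hp)

/-- A Prüfer domain: every nonzero finitely generated ideal is invertible. -/
def IsPruferDomain (A : Type*) [CommRing A] [IsDomain A] : Prop :=
  ∀ I : Ideal A, I ≠ ⊥ → I.FG →
    IsUnit (I : FractionalIdeal (nonZeroDivisors A) (FractionRing A))

/-- A GCD domain: any two nonzero elements admit a greatest common divisor. -/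
def IsGCDDomain (A : Type*) [CommRing A] [IsDomain A] : Prop :=
  ∀ a b : A, a ≠ 0 → b ≠ 0 →
    ∃ g : A, g ∣ a ∧ g ∣ b ∧ ∀ c : A, c ∣ a → c ∣ b → c ∣ g

/-- The algebra structure of the fraction field of `T` over a subring of `T`. -/
noncomputable def algFrac (S : Subring T) : Algebra ↥S (FractionRing T) :=
  ((algebraMap T (FractionRing T)).comp S.subtype).toAlgebra

end Setup


set_option linter.unusedSectionVars false
set_option linter.unusedVariables false
set_option maxHeartbeats 1000000

section PruferChar

variable {A : Type*} [CommRing A] [IsDomain A]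

def PelCond (A : Type*) [CommRing A] : Prop :=
  ∀ α β : A, α ≠ 0 → β ≠ 0 →
    ∃ s t u v : A, s + v = 1 ∧ s * β = t * α ∧ u * β = v * α

noncomputable abbrev FI (A : Type*) [CommRing A] [IsDomain A] :=
  FractionalIdeal (nonZeroDivisors A) (FractionRing A)

lemma coe_span_pair (a b : A) :
    ((Ideal.span {a, b} : Ideal A) : FI A) =
      FractionalIdeal.spanSingleton _ (algebraMap A (FractionRing A) a)
        + FractionalIdeal.spanSingleton _ (algebraMap A (FractionRing A) b) := by
  rw [Ideal.span_insert, FractionalIdeal.coeIdeal_sup, FractionalIdeal.coeIdeal_span_singleton,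
    FractionalIdeal.coeIdeal_span_singleton]

lemma pair_isUnit {α β s t u v : A} (hα : α ≠ 0)
    (h1 : s + v = 1) (h2 : s * β = t * α) (h3 : u * β = v * α) :
    IsUnit ((Ideal.span {α, β} : Ideal A) : FI A) := by
  set f := algebraMap A (FractionRing A) with hf
  have hfα : f α ≠ 0 := (map_ne_zero_iff f (IsFractionRing.injective A _)).2 hα
  have h2' : f s * f β = f t * f α := by rw [← map_mul, ← map_mul, h2]
  have h3' : f u * f β = f v * f α := by rw [← map_mul, ← map_mul, h3]
  set x := (f α)⁻¹ * f s with hx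
  set y := (f α)⁻¹ * f u with hy
  apply IsUnit.of_mul_eq_one
    (FractionalIdeal.spanSingleton _ x + FractionalIdeal.spanSingleton _ y)
  have eαx : f α * x = f s := by rw [hx]; field_simp
  have eαy : f α * y = f u := by rw [hy]; field_simp
  have eβx : f β * x = f t := by rw [hx]; field_simp; linear_combination h2'
  have eβy : f β * y = f v := by rw [hy]; field_simp; linear_combination h3'
  rw [coe_span_pair, add_mul, mul_add, mul_add,
    FractionalIdeal.spanSingleton_mul_spanSingleton,
    FractionalIdeal.spanSingleton_mul_spanSingleton,
    FractionalIdeal.spanSingleton_mul_spanSingleton,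
    FractionalIdeal.spanSingleton_mul_spanSingleton, eαx, eαy, eβx, eβy]
  have key : (FractionalIdeal.spanSingleton (nonZeroDivisors A) (f s) +
      FractionalIdeal.spanSingleton _ (f u)) +
      (FractionalIdeal.spanSingleton _ (f t) + FractionalIdeal.spanSingleton _ (f v)) =
      ((Ideal.span {s, u, t, v} : Ideal A) : FI A) := by
    simp only [Ideal.span_insert, FractionalIdeal.coeIdeal_sup,
      FractionalIdeal.coeIdeal_span_singleton, add_assoc]
    rfl
  rw [key, show (Ideal.span {s, u, t, v} : Ideal A) = ⊤ from ?_,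
    FractionalIdeal.coeIdeal_top]
  rw [Ideal.eq_top_iff_one, ← h1]
  exact Ideal.add_mem _ (Ideal.subset_span (by simp)) (Ideal.subset_span (by simp))

lemma ideal_identity {R : Type*} [CommRing R] (A B C : Ideal R) :
    (A + B) * ((A + C) * (B + C)) = (A + B + C) * (A * B + A * C + B * C) := by
  have idem : ∀ X : Ideal R, X + X = X := fun X => sup_idem X
  have e2 : ∀ X : Ideal R, X * 2 = X := fun X => by rw [mul_two, idem]
  have e3 : ∀ X : Ideal R, X * 3 = X := fun X => by
    rw [show (3 : Ideal R) = 2 + 1 by norm_num, mul_add, mul_one, e2, idem]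
  ring_nf
  rw [e2, e3]

lemma prufer_char_aux (h : PelCond A) (s : Finset A) :
    (0:A) ∉ s → s.Nonempty → IsUnit ((Ideal.span (s : Set A) : Ideal A) : FI A) := by
  classical
  induction s using Finset.strongInduction with
  | _ s ih =>
    intro h0 hne
    obtain ⟨a, ha⟩ := hne
    have ha0 : a ≠ 0 := fun e => h0 (e ▸ ha)
    rcases Finset.eq_empty_or_nonempty (s.erase a) with hea | ⟨b, hb⟩
    · -- s = {a}
      have hs : s = {a} := by
        apply Finset.eq_singleton_iff_unique_mem.mpr
        refine ⟨ha, fun x hx => ?_⟩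
        by_contra hxa
        exact (Finset.eq_empty_iff_forall_notMem.mp hea x) (Finset.mem_erase.mpr ⟨hxa, hx⟩)
      obtain ⟨p, q, u, v, h1, h2, h3⟩ := h a a ha0 ha0
      have := pair_isUnit ha0 h1 h2 h3
      simpa [hs] using this
    · have hba : b ≠ a := (Finset.mem_erase.mp hb).1
      have hbs : b ∈ s := (Finset.mem_erase.mp hb).2
      have hb0 : b ≠ 0 := fun e => h0 (e ▸ hbs)
      set r := (s.erase a).erase b with hr
      rcases Finset.eq_empty_or_nonempty r with hre | hrne
      · -- s = {a, b}
        have hsa : s.erase a = {b} := by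
          apply Finset.eq_singleton_iff_unique_mem.mpr
          refine ⟨hb, fun x hx => ?_⟩
          by_contra hxb
          exact (Finset.eq_empty_iff_forall_notMem.mp hre x) (Finset.mem_erase.mpr ⟨hxb, hx⟩)
        have hs : s = {a, b} := by
          rw [← Finset.insert_erase ha, hsa]
        obtain ⟨p, q, u, v, h1, h2, h3⟩ := h a b ha0 hb0
        have := pair_isUnit ha0 h1 h2 h3
        simpa [hs] using this
      · -- main case
        have hs : s = insert a (insert b r) := by
          rw [hr, Finset.insert_erase hb, Finset.insert_erase ha]
        set Sa := Ideal.span ({a} : Set A) with hSa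
        set Sb := Ideal.span ({b} : Set A) with hSb
        set Sr := Ideal.span (r : Set A) with hSr
        have har : a ∉ insert b r := by
          simp only [Finset.mem_insert, hr]
          rintro (e | e)
          · exact hba e.symm
          · exact Finset.notMem_erase a _ (Finset.mem_of_mem_erase e)
        have hbr : b ∉ r := Finset.notMem_erase b _
        have hspan : Ideal.span (s : Set A) = Sa + Sb + Sr := by
          rw [hs, Finset.coe_insert, Finset.coe_insert, Ideal.span_insert, Ideal.span_insert,
            Submodule.add_eq_sup, Submodule.add_eq_sup, sup_assoc]
        have h12 : Ideal.span ({a, b} : Set A) = Sa + Sb := by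
          rw [Ideal.span_insert, Submodule.add_eq_sup]
        have h13 : Ideal.span ((insert a r : Finset A) : Set A) = Sa + Sr := by
          rw [Finset.coe_insert, Ideal.span_insert, Submodule.add_eq_sup]
        have h23 : Ideal.span ((insert b r : Finset A) : Set A) = Sb + Sr := by
          rw [Finset.coe_insert, Ideal.span_insert, Submodule.add_eq_sup]
        obtain ⟨p, q, u', v', h1, h2, h3⟩ := h a b ha0 hb0
        have u1 : IsUnit ((Sa + Sb : Ideal A) : FI A) := by
          rw [← h12]; exact pair_isUnit ha0 h1 h2 h3
        have ssub2 : insert a r ⊂ s := by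
          rw [hs]
          refine Finset.ssubset_iff_of_subset ?_ |>.mpr ⟨b, ?_, ?_⟩
          · intro x hx
            rcases Finset.mem_insert.mp hx with rfl | hx
            · exact Finset.mem_insert_self _ _
            · exact Finset.mem_insert_of_mem (Finset.mem_insert_of_mem hx)
          · exact Finset.mem_insert_of_mem (Finset.mem_insert_self _ _)
          · simp only [Finset.mem_insert]
            rintro (e | e)
            · exact hba e
            · exact hbr e
        have ssub3 : insert b r ⊂ s := by
          rw [hs]
          exact Finset.ssubset_insert har
        have u2 : IsUnit ((Sa + Sr : Ideal A) : FI A) := by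
          rw [← h13]
          refine ih _ ssub2 ?_ ⟨a, Finset.mem_insert_self _ _⟩
          simp only [Finset.mem_insert]
          rintro (e | e)
          · exact ha0 e.symm
          · exact h0 (Finset.mem_of_mem_erase (Finset.mem_of_mem_erase (hr ▸ e)))
        have u3 : IsUnit ((Sb + Sr : Ideal A) : FI A) := by
          rw [← h23]
          refine ih _ ssub3 ?_ ⟨b, Finset.mem_insert_self _ _⟩
          simp only [Finset.mem_insert]
          rintro (e | e)
          · exact hb0 e.symm
          · exact h0 (Finset.mem_of_mem_erase (Finset.mem_of_mem_erase (hr ▸ e)))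
        have uprod := u1.mul (u2.mul u3)
        rw [← FractionalIdeal.coeIdeal_mul, ← FractionalIdeal.coeIdeal_mul,
          ideal_identity, FractionalIdeal.coeIdeal_mul] at uprod
        have := isUnit_of_mul_isUnit_left uprod
        rwa [hspan]

lemma prufer_of_pel (h : PelCond A) : IsPruferDomain A := by
  classical
  intro I hbot hfg
  obtain ⟨s, hs⟩ := hfg
  have hspan : Ideal.span ((s.erase 0 : Finset A) : Set A) = I := by
    rw [← hs]
    apply le_antisymm
    · exact Ideal.span_mono (by exact_mod_cast Finset.erase_subset _ _)
    · rw [Ideal.span_le]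
      intro x hx
      rcases eq_or_ne x 0 with rfl | hx0
      · exact zero_mem _
      · exact Ideal.subset_span (by simpa using Finset.mem_erase.mpr ⟨hx0, by simpa using hx⟩ : x ∈ (s.erase 0 : Finset A))
  have hne : (s.erase 0).Nonempty := by
    rcases Finset.eq_empty_or_nonempty (s.erase 0) with he | hne
    · exfalso; apply hbot; rw [← hspan, he]; simp
    · exact hne
  have := prufer_char_aux h (s.erase 0) (Finset.notMem_erase 0 s) hne
  rwa [hspan] at this

lemma pel_of_prufer (h : IsPruferDomain A) : PelCond A := by
  classical
  intro α β hα hβ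
  set f := algebraMap A (FractionRing A) with hf
  have finj := IsFractionRing.injective A (FractionRing A)
  have hI : (Ideal.span {α, β} : Ideal A) ≠ ⊥ := by
    intro e
    apply hα
    have : α ∈ (Ideal.span {α, β} : Ideal A) := Ideal.subset_span (by simp)
    rw [e] at this
    simpa using this
  obtain ⟨J, hJ⟩ := isUnit_iff_exists_inv.mp
    (h _ hI ⟨{α, β}, by simp [Finset.coe_insert]⟩)
  have h1 : (1 : FractionRing A) ∈ ((Ideal.span {α,β} : Ideal A) : FI A) * J := by
    rw [hJ]; exact FractionalIdeal.one_mem_one _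
  rw [coe_span_pair, add_mul, FractionalIdeal.mem_add] at h1
  obtain ⟨i, hi, j, hj, hij⟩ := h1
  rw [FractionalIdeal.mem_singleton_mul] at hi hj
  obtain ⟨x, hx, rfl⟩ := hi
  obtain ⟨y, hy, rfl⟩ := hj
  have mem1 : ∀ w ∈ J, ∀ γ ∈ ({α, β} : Set A), f γ * w ∈ (1 : FI A) := by
    intro w hw γ hγ
    rw [← hJ]
    refine FractionalIdeal.mul_mem_mul ?_ hw
    exact FractionalIdeal.mem_coeIdeal_of_mem _ (Ideal.subset_span hγ)
  obtain ⟨s, hs⟩ := (FractionalIdeal.mem_one_iff _).mp (mem1 x hx α (by simp))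
  obtain ⟨t, ht⟩ := (FractionalIdeal.mem_one_iff _).mp (mem1 x hx β (by simp))
  obtain ⟨u, hu⟩ := (FractionalIdeal.mem_one_iff _).mp (mem1 y hy α (by simp))
  obtain ⟨v, hv⟩ := (FractionalIdeal.mem_one_iff _).mp (mem1 y hy β (by simp))
  refine ⟨s, t, u, v, finj ?_, finj ?_, finj ?_⟩
  · rw [map_add, map_one, hs, hv, hij]
  · rw [map_mul, map_mul, hs, ht, hf]; ring
  · rw [map_mul, map_mul, hu, hv, hf]; ring

theorem prufer_iff_pel : IsPruferDomain A ↔ PelCond A :=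
  ⟨pel_of_prufer, prufer_of_pel⟩


end PruferChar

section DM

variable {T : Type*} [CommRing T] [IsDomain T] {L : Subring T} {M : Ideal T} {K : Subring T}

noncomputable def piL (hLM : DirectSumDecomp L M) (t : T) : T :=
  Classical.choose (hLM.1 t)

lemma piL_spec (hLM : DirectSumDecomp L M) (t : T) :
    piL hLM t ∈ L ∧ ∃ m ∈ M, t = piL hLM t + m :=
  Classical.choose_spec (hLM.1 t)

lemma piL_mem (hLM : DirectSumDecomp L M) (t : T) : piL hLM t ∈ L :=
  (piL_spec hLM t).1

lemma sub_piL_mem (hLM : DirectSumDecomp L M) (t : T) : t - piL hLM t ∈ M := by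
  obtain ⟨m, hm, he⟩ := (piL_spec hLM t).2
  have h' : t - piL hLM t = m := sub_eq_iff_eq_add.mpr (he.trans (add_comm _ _))
  rwa [h']

lemma piL_unique (hLM : DirectSumDecomp L M) {t l : T} (hl : l ∈ L) (hm : t - l ∈ M) :
    piL hLM t = l := by
  have h1 : piL hLM t - l ∈ L := L.sub_mem (piL_mem hLM t) hl
  have h2 : piL hLM t - l ∈ M := by
    have e : piL hLM t - l = (t - l) - (t - piL hLM t) := by ring
    rw [e]
    exact M.sub_mem hm (sub_piL_mem hLM t)
  exact sub_eq_zero.mp (hLM.2 _ h1 h2)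

lemma piL_of_memL (hLM : DirectSumDecomp L M) {l : T} (hl : l ∈ L) : piL hLM l = l :=
  piL_unique hLM hl (by simpa using M.zero_mem)

lemma piL_eq_zero_iff (hLM : DirectSumDecomp L M) {t : T} : piL hLM t = 0 ↔ t ∈ M := by
  constructor
  · intro h
    have := sub_piL_mem hLM t
    rwa [h, sub_zero] at this
  · intro h
    exact piL_unique hLM L.zero_mem (by simpa using h)

lemma piL_add (hLM : DirectSumDecomp L M) (x y : T) :
    piL hLM (x + y) = piL hLM x + piL hLM y := by
  apply piL_unique hLM (L.add_mem (piL_mem hLM x) (piL_mem hLM y))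
  have e : x + y - (piL hLM x + piL hLM y) = (x - piL hLM x) + (y - piL hLM y) := by ring
  rw [e]
  exact M.add_mem (sub_piL_mem hLM x) (sub_piL_mem hLM y)

lemma piL_sub (hLM : DirectSumDecomp L M) (x y : T) :
    piL hLM (x - y) = piL hLM x - piL hLM y := by
  apply piL_unique hLM (L.sub_mem (piL_mem hLM x) (piL_mem hLM y))
  have e : x - y - (piL hLM x - piL hLM y) = (x - piL hLM x) - (y - piL hLM y) := by ring
  rw [e]
  exact M.sub_mem (sub_piL_mem hLM x) (sub_piL_mem hLM y)

lemma piL_mul (hLM : DirectSumDecomp L M) (x y : T) :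
    piL hLM (x * y) = piL hLM x * piL hLM y := by
  apply piL_unique hLM (L.mul_mem (piL_mem hLM x) (piL_mem hLM y))
  have e : x * y - piL hLM x * piL hLM y
      = (x - piL hLM x) * y + piL hLM x * (y - piL hLM y) := by ring
  rw [e]
  exact M.add_mem (M.mul_mem_right _ (sub_piL_mem hLM x)) (M.mul_mem_left _ (sub_piL_mem hLM y))

lemma piL_one (hLM : DirectSumDecomp L M) : piL hLM 1 = 1 :=
  piL_of_memL hLM L.one_mem

lemma mem_ringR_iff (hLM : DirectSumDecomp L M) (hKL : K ≤ L) {t : T} :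
    t ∈ ringR K M ↔ piL hLM t ∈ K := by
  constructor
  · rintro ⟨k, hk, m, hm, rfl⟩
    have e : piL hLM (k + m) = k := by
      apply piL_unique hLM (hKL hk)
      simpa using hm
    rwa [e]
  · intro h
    exact ⟨piL hLM t, h, t - piL hLM t, sub_piL_mem hLM t, by ring⟩

lemma M_le_ringR {m : T} (hm : m ∈ M) : m ∈ ringR K M :=
  ⟨0, K.zero_mem, m, hm, by ring⟩

lemma pel_subring_iff (S : Subring T) :
    PelCond ↥S ↔ ∀ α β : T, α ∈ S → β ∈ S → α ≠ 0 → β ≠ 0 →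
      ∃ s ∈ S, ∃ t ∈ S, ∃ u ∈ S, ∃ v ∈ S, s + v = 1 ∧ s * β = t * α ∧ u * β = v * α := by
  constructor
  · intro h α β hα hβ hα0 hβ0
    obtain ⟨s, t, u, v, h1, h2, h3⟩ := h ⟨α, hα⟩ ⟨β, hβ⟩
      (fun e => hα0 (congrArg Subtype.val e)) (fun e => hβ0 (congrArg Subtype.val e))
    refine ⟨s, s.2, t, t.2, u, u.2, v, v.2, ?_, ?_, ?_⟩
    · simpa using congrArg Subtype.val h1
    · simpa using congrArg Subtype.val h2
    · simpa using congrArg Subtype.val h3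
  · intro h α β hα0 hβ0
    obtain ⟨s, hs, t, ht, u, hu, v, hv, h1, h2, h3⟩ := h α β α.2 β.2
      (fun e => hα0 (Subtype.ext e)) (fun e => hβ0 (Subtype.ext e))
    exact ⟨⟨s, hs⟩, ⟨t, ht⟩, ⟨u, hu⟩, ⟨v, hv⟩, Subtype.ext (by push_cast; exact h1),
      Subtype.ext (by push_cast; exact h2), Subtype.ext (by push_cast; exact h3)⟩

/-! Forward directions -/

lemma fracOf_of_pelR (hM0 : M ≠ ⊥) (hLM : DirectSumDecomp L M) (hKL : K ≤ L)
    (h : PelCond ↥(ringR K M)) : IsFracOf K L := by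
  intro l hl
  rcases eq_or_ne l 0 with rfl | hl0
  · exact ⟨0, K.zero_mem, 1, K.one_mem, one_ne_zero, by ring⟩
  obtain ⟨m, hm, hm0⟩ := Submodule.exists_mem_ne_zero_of_ne_bot hM0
  have hβM : l * m ∈ M := M.mul_mem_left l hm
  obtain ⟨s, hs, t, ht, u, hu, v, hv, h1, h2, h3⟩ := (pel_subring_iff (ringR K M)).mp h
    m (l * m) (M_le_ringR hm) (M_le_ringR hβM) hm0 (mul_ne_zero hl0 hm0)
  have hsl : s * l = t := by
    apply mul_right_cancel₀ hm0
    linear_combination h2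
  have hul : u * l = v := by
    apply mul_right_cancel₀ hm0
    linear_combination h3
  have hπt : piL hLM t ∈ K := (mem_ringR_iff hLM hKL).mp ht
  have hπu : piL hLM u ∈ K := (mem_ringR_iff hLM hKL).mp hu
  have hπv : piL hLM v ∈ K := (mem_ringR_iff hLM hKL).mp hv
  have hπl : piL hLM l = l := piL_of_memL hLM hl
  have e1 : piL hLM s + piL hLM v = 1 := by rw [← piL_add, h1, piL_one]
  have e2 : piL hLM s * l = piL hLM t := by rw [← hπl, ← piL_mul, hsl]
  have e3 : piL hLM u * l = piL hLM v := by rw [← hπl, ← piL_mul, hul]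
  rcases eq_or_ne (piL hLM u) 0 with hu0 | hu0
  · have hv0 : piL hLM v = 0 := by rw [← e3, hu0, zero_mul]
    have hs1 : piL hLM s = 1 := by
      have := e1
      rw [hv0, add_zero] at this
      exact this
    have hlK : l ∈ K := by
      have e : piL hLM t = l := by rw [← e2, hs1, one_mul]
      rwa [e] at hπt
    exact ⟨l, hlK, 1, K.one_mem, one_ne_zero, by ring⟩
  · exact ⟨piL hLM v, hπv, piL hLM u, hπu, hu0, by rw [mul_comm]; exact e3⟩

lemma pelK_of_pelR (hLM : DirectSumDecomp L M) (hKL : K ≤ L)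
    (h : PelCond ↥(ringR K M)) : PelCond ↥K := by
  rw [pel_subring_iff]
  intro α β hα hβ hα0 hβ0
  obtain ⟨s, hs, t, ht, u, hu, v, hv, h1, h2, h3⟩ := (pel_subring_iff (ringR K M)).mp h
    α β ((mem_ringR_iff hLM hKL).mpr (by rwa [piL_of_memL hLM (hKL hα)]))
    ((mem_ringR_iff hLM hKL).mpr (by rwa [piL_of_memL hLM (hKL hβ)])) hα0 hβ0
  have hπα : piL hLM α = α := piL_of_memL hLM (hKL hα)
  have hπβ : piL hLM β = β := piL_of_memL hLM (hKL hβ)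
  refine ⟨piL hLM s, (mem_ringR_iff hLM hKL).mp hs, piL hLM t, (mem_ringR_iff hLM hKL).mp ht,
    piL hLM u, (mem_ringR_iff hLM hKL).mp hu, piL hLM v, (mem_ringR_iff hLM hKL).mp hv,
    ?_, ?_, ?_⟩
  · rw [← piL_add, h1, piL_one]
  · calc piL hLM s * β = piL hLM s * piL hLM β := by rw [hπβ]
    _ = piL hLM (s * β) := (piL_mul hLM s β).symm
    _ = piL hLM (t * α) := by rw [h2]
    _ = piL hLM t * piL hLM α := piL_mul hLM t α
    _ = piL hLM t * α := by rw [hπα]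
  · calc piL hLM u * β = piL hLM u * piL hLM β := by rw [hπβ]
    _ = piL hLM (u * β) := (piL_mul hLM u β).symm
    _ = piL hLM (v * α) := by rw [h3]
    _ = piL hLM v * piL hLM α := piL_mul hLM v α
    _ = piL hLM v * α := by rw [hπα]

lemma pelT_of_pelR (hM0 : M ≠ ⊥) (h : PelCond ↥(ringR K M)) : PelCond T := by
  intro α β hα0 hβ0
  obtain ⟨m, hm, hm0⟩ := Submodule.exists_mem_ne_zero_of_ne_bot hM0
  obtain ⟨s, hs, t, ht, u, hu, v, hv, h1, h2, h3⟩ := (pel_subring_iff (ringR K M)).mp h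
    (m * α) (m * β) (M_le_ringR (M.mul_mem_right α hm)) (M_le_ringR (M.mul_mem_right β hm))
    (mul_ne_zero hm0 hα0) (mul_ne_zero hm0 hβ0)
  refine ⟨s, t, u, v, h1, ?_, ?_⟩
  · apply mul_left_cancel₀ hm0
    linear_combination h2
  · apply mul_left_cancel₀ hm0
    linear_combination h3

/-! Backward direction -/

lemma K_prop_on_L (hfrac : IsFracOf K L) (hK : PelCond ↥K) :
    ∀ η : T, η ∈ L → ∃ a ∈ K, ∃ b ∈ K, a + b * η = 1 ∧ a * η ∈ K ∧ b * η ∈ K := by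
  intro η hη
  rcases eq_or_ne η 0 with rfl | hη0
  · exact ⟨1, K.one_mem, 0, K.zero_mem, by ring, by simpa using K.zero_mem,
      by simpa using K.zero_mem⟩
  obtain ⟨c, hc, d, hd, hd0, hcd⟩ := hfrac η hη
  have hc0 : c ≠ 0 := by
    rw [← hcd]
    exact mul_ne_zero hη0 hd0
  obtain ⟨s₀, hs₀, t₀, ht₀, u₀, hu₀, v₀, hv₀, h1, h2, h3⟩ :=
    (pel_subring_iff K).mp hK d c hd hc hd0 hc0
  have e2 : s₀ * η = t₀ := by
    apply mul_right_cancel₀ hd0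
    linear_combination h2 + s₀ * hcd
  have e3 : u₀ * η = v₀ := by
    apply mul_right_cancel₀ hd0
    linear_combination h3 + u₀ * hcd
  exact ⟨s₀, hs₀, u₀, hu₀, by rw [e3]; exact h1, by rw [e2]; exact ht₀, by rw [e3]; exact hv₀⟩

lemma main_case (hL : IsFieldSub L) (hLM : DirectSumDecomp L M) (hKL : K ≤ L)
    (hfrac : IsFracOf K L) (hK : PelCond ↥K)
    (α β s t u v : T) (h1 : s + v = 1) (h2 : s * β = t * α) (h3 : u * β = v * α)
    (hπs : piL hLM s ≠ 0) :
    ∃ s' ∈ ringR K M, ∃ t' ∈ ringR K M, ∃ u' ∈ ringR K M, ∃ v' ∈ ringR K M,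
      s' + v' = 1 ∧ s' * β = t' * α ∧ u' * β = v' * α := by
  set l := piL hLM s with hl
  obtain ⟨l', hl', hll'⟩ := hL l (piL_mem hLM s) hπs
  set η := l' * piL hLM t with hηdef
  have hηL : η ∈ L := L.mul_mem hl' (piL_mem hLM t)
  obtain ⟨a, ha, b, hb, hab, haη, hbη⟩ := K_prop_on_L hfrac hK η hηL
  set m₂ := (a * (l' * s) + b * (l' * t)) - 1 with hm₂def
  have hπl' : piL hLM l' = l' := piL_of_memL hLM hl'
  have hπa : piL hLM a = a := piL_of_memL hLM (hKL ha)
  have hπb : piL hLM b = b := piL_of_memL hLM (hKL hb)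
  have hπm₂ : piL hLM m₂ = 0 := by
    rw [hm₂def, piL_sub, piL_add, piL_mul, piL_mul, piL_mul, piL_mul, hπa, hπb, hπl',
      piL_one, ← hl]
    linear_combination hab - b * hηdef + a * hll'
  have hπs' : piL hLM (a * (l' * s) - m₂ * s) = a := by
    rw [piL_sub, piL_mul, piL_mul, piL_mul, hπa, hπl', hπm₂, ← hl]
    linear_combination a * hll'
  have hπt' : piL hLM (a * (l' * t) - m₂ * t) = a * η := by
    rw [piL_sub, piL_mul, piL_mul, piL_mul, hπa, hπl', hπm₂, hηdef]
    ring
  have hπu' : piL hLM (b * (l' * s) - m₂ * u) = b := by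
    rw [piL_sub, piL_mul, piL_mul, piL_mul, hπb, hπl', hπm₂, ← hl]
    linear_combination b * hll'
  have hπv' : piL hLM (b * (l' * t) - m₂ * v) = b * η := by
    rw [piL_sub, piL_mul, piL_mul, piL_mul, hπb, hπl', hπm₂, hηdef]
    ring
  refine ⟨a * (l' * s) - m₂ * s, (mem_ringR_iff hLM hKL).mpr (by rw [hπs']; exact ha),
    a * (l' * t) - m₂ * t, (mem_ringR_iff hLM hKL).mpr (by rw [hπt']; exact haη),
    b * (l' * s) - m₂ * u, (mem_ringR_iff hLM hKL).mpr (by rw [hπu']; exact hb),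
    b * (l' * t) - m₂ * v, (mem_ringR_iff hLM hKL).mpr (by rw [hπv']; exact hbη),
    ?_, ?_, ?_⟩
  · rw [hm₂def]
    linear_combination (1 - (a * (l' * s) + b * (l' * t))) * h1
  · linear_combination (a * l' - m₂) * h2
  · linear_combination b * l' * h2 - m₂ * h3

lemma pelR_of_all (hL : IsFieldSub L) (hLM : DirectSumDecomp L M) (hKL : K ≤ L)
    (hT : PelCond T) (hfrac : IsFracOf K L) (hK : PelCond ↥K) :
    PelCond ↥(ringR K M) := by
  rw [pel_subring_iff]
  intro α β hα hβ hα0 hβ0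
  obtain ⟨s, t, u, v, h1, h2, h3⟩ := hT α β hα0 hβ0
  rcases eq_or_ne (piL hLM s) 0 with hs0 | hs0
  · have hv1 : piL hLM v ≠ 0 := by
      have := piL_add hLM s v
      rw [h1, piL_one, hs0, zero_add] at this
      rw [← this]
      exact one_ne_zero
    obtain ⟨S, hS, Tt, hTt, U, hU, V, hV, g1, g2, g3⟩ :=
      main_case hL hLM hKL hfrac hK β α v u t s (by linear_combination h1) h3.symm h2.symm hv1
    exact ⟨V, hV, U, hU, Tt, hTt, S, hS, by linear_combination g1, g3.symm, g2.symm⟩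
  · exact main_case hL hLM hKL hfrac hK α β s t u v h1 h2 h3 hs0

end DM

theorem stmt_11 {T : Type*} [CommRing T] [IsDomain T]
    (L : Subring T) (M : Ideal T) (K : Subring T)
    (hL : IsFieldSub L) (hM : M.IsMaximal) (hM0 : M ≠ ⊥)
    (hLM : DirectSumDecomp L M) (hKL : K ≤ L) (hKne : K ≠ L) :
    IsPruferDomain ↥(ringR K M) ↔
      (IsPruferDomain T ∧ IsFracOf K L ∧ IsPruferDomain ↥K) := by
  rw [show IsPruferDomain ↥(ringR K M) ↔ PelCond ↥(ringR K M) from prufer_iff_pel,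
    show IsPruferDomain T ↔ PelCond T from prufer_iff_pel,
    show IsPruferDomain ↥K ↔ PelCond ↥K from prufer_iff_pel]
  constructor
  · intro h
    exact ⟨pelT_of_pelR hM0 h, fracOf_of_pelR hM0 hLM hKL h, pelK_of_pelR hLM hKL h⟩
  · rintro ⟨hT, hfrac, hK⟩
    exact pelR_of_all hL hLM hKL hT hfrac hK
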